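/- Consider the generalized top-k selective gossiping trajectory with m ≥ 2 agents, n ≥ 1 candidates, and k ∈ [n], assume the connectivity graph G = ([m], E) is connected, and let X(∞) = lim_{t→∞} X(t) denote the (existing) entrywise limit. Fix {i₁,i₂} ∈ E. If for some candidate j ∈ [n] and some agent i ∈ [m] we have X_{ij}(∞) > α_{i₁i₂}, then j ∈ S^∞_{i₁′i₂′} for every edge {i₁′,i₂′} ∈ E. -/

import Mathlib

open Filter Topology

/-- The set of indices of the top-k entries of v: indices j for which fewer
than k entries of v are strictly greater than v j. -/
def topSet {n : ℕ} (k : ℕ) (v : Fin n → ℝ) : Set (Fin n) :=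
  {j | Set.ncard {l | v j < v l} < k}

section TopSetAux

lemma topSet_mono {n : ℕ} {k k' : ℕ} (h : k ≤ k') (v : Fin n → ℝ) :
    topSet k v ⊆ topSet k' v := fun _ hj => lt_of_lt_of_le hj h

lemma card_topSet {n : ℕ} (v : Fin n → ℝ) : ∀ k, k ≤ n → k ≤ (topSet k v).ncard := by
  intro k
  induction k with
  | zero => intro _; exact Nat.zero_le _
  | succ r ih =>
    intro hrn
    have hr : r ≤ (topSet r v).ncard := ih (Nat.le_of_succ_le hrn)
    by_cases hbig : r + 1 ≤ (topSet r v).ncard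
    · exact hbig.trans (Set.ncard_le_ncard (topSet_mono (Nat.le_succ r) v))
    · push_neg at hbig
      have hbig' : (topSet r v).ncard ≤ r := Nat.lt_succ_iff.mp hbig
      have hcompl : ((topSet r v)ᶜ).Nonempty := by
        rw [Set.nonempty_compl]
        intro h
        have : (topSet r v).ncard = n := by
          rw [h, Set.ncard_univ, Nat.card_eq_fintype_card, Fintype.card_fin]
        omega
      obtain ⟨j₀, hj₀, hmax⟩ := Set.exists_max_image _ v (Set.toFinite _) hcompl
      have hsub : {l | v j₀ < v l} ⊆ topSet r v := by
        intro l hl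
        by_contra hlT
        exact absurd hl (not_lt.2 (hmax l hlT))
      have hj₀mem : j₀ ∈ topSet (r + 1) v :=
        Nat.lt_succ_of_le ((Set.ncard_le_ncard hsub).trans hbig')
      have hins : insert j₀ (topSet r v) ⊆ topSet (r + 1) v :=
        Set.insert_subset hj₀mem (topSet_mono (Nat.le_succ r) v)
      have hcard : r + 1 ≤ (insert j₀ (topSet r v)).ncard := by
        rw [Set.ncard_insert_of_notMem hj₀]; omega
      exact hcard.trans (Set.ncard_le_ncard hins)

lemma topSet_nonempty {n k : ℕ} (hk : 1 ≤ k) (hkn : k ≤ n) (v : Fin n → ℝ) :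
    (topSet k v).Nonempty := by
  apply Set.nonempty_of_ncard_ne_zero
  have := card_topSet v k hkn
  omega

lemma lt_of_mem_topSet {n k : ℕ} {v : Fin n → ℝ} {j l : Fin n}
    (hj : j ∉ topSet k v) (hl : l ∈ topSet k v) : v j < v l := by
  by_contra h
  push_neg at h
  apply hj
  have hsub : {r | v j < v r} ⊆ {r | v l < v r} := fun r hr => lt_of_le_of_lt h hr
  exact lt_of_le_of_lt (Set.ncard_le_ncard hsub) hl

lemma not_mem_topSet_of {n k : ℕ} {v : Fin n → ℝ} {j : Fin n} {K : Set (Fin n)}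
    (hK : K ⊆ {l | v j < v l}) (hcard : k ≤ K.ncard) : j ∉ topSet k v := by
  intro hj
  exact absurd (lt_of_le_of_lt (hcard.trans (Set.ncard_le_ncard hK)) hj) (lt_irrefl k)

lemma lim_le' {s : Set ℕ} (hs : s.Infinite) {f g : ℕ → ℝ} {A B : ℝ}
    (hf : Tendsto f atTop (𝓝 A)) (hg : Tendsto g atTop (𝓝 B))
    (hle : ∀ t ∈ s, f t ≤ g t) : A ≤ B := by
  have hmono : StrictMono (Nat.nth (· ∈ s)) := Nat.nth_strictMono hs
  exact le_of_tendsto_of_tendsto' (hf.comp hmono.tendsto_atTop)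
    (hg.comp hmono.tendsto_atTop)
    (fun i => hle _ (Nat.nth_mem_of_infinite hs i))

lemma lim_eq' {s : Set ℕ} (hs : s.Infinite) {f g : ℕ → ℝ} {A B : ℝ}
    (hf : Tendsto f atTop (𝓝 A)) (hg : Tendsto g atTop (𝓝 B))
    (heq : ∀ t ∈ s, f t = g t) : A = B :=
  le_antisymm (lim_le' hs hf hg (fun t ht => (heq t ht).le))
    (lim_le' hs hg hf (fun t ht => (heq t ht).ge))

lemma fin_ev {S : Set ℕ} (h : S.Finite) : ∃ T, ∀ t, T ≤ t → t ∉ S := by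
  obtain ⟨T, hT⟩ := h.bddAbove
  exact ⟨T + 1, fun t ht hts => by have := hT hts; omega⟩

lemma walk_ind {V : Type*} {G : SimpleGraph V} {P : V → Prop}
    (hP : ∀ u w, G.Adj u w → P u → P w) :
    ∀ {u v : V} (_ : G.Walk u v), P u → P v := by
  intro u v wk
  induction wk with
  | nil => exact id
  | cons h _ ih => exact fun hu => ih (hP _ _ h hu)

end TopSetAux

section Gossip

variable {m n k : ℕ}

def Eset (p q : ℕ → Fin m) (a b : Fin m) : Set ℕ :=
  {t | (p t = a ∧ q t = b) ∨ (p t = b ∧ q t = a)}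

def Aset (p q : ℕ → Fin m) (S : ℕ → Set (Fin n)) (a b : Fin m) : Set (Fin n) :=
  {j | {t | ((p t = a ∧ q t = b) ∨ (p t = b ∧ q t = a)) ∧ j ∈ S t}.Infinite}

noncomputable def alphaE (p q : ℕ → Fin m) (S : ℕ → Set (Fin n))
    (Xinf : Fin m → Fin n → ℝ) (a b : Fin m) : ℝ :=
  sInf ((fun j => Xinf a j) '' Aset p q S a b)

variable {p q : ℕ → Fin m} {X : ℕ → Fin m → Fin n → ℝ} {S : ℕ → Set (Fin n)}
  {Xinf : Fin m → Fin n → ℝ}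

lemma mem_Eset {a b : Fin m} {t : ℕ} :
    t ∈ Eset p q a b ↔ (p t = a ∧ q t = b) ∨ (p t = b ∧ q t = a) := Iff.rfl

lemma Eset_comm (a b : Fin m) : Eset p q a b = Eset p q b a := by
  ext t; simp only [mem_Eset]; tauto

lemma mem_Aset {a b : Fin m} {j : Fin n} :
    j ∈ Aset p q S a b ↔ {t | t ∈ Eset p q a b ∧ j ∈ S t}.Infinite := Iff.rfl

lemma Aset_comm (a b : Fin m) : Aset p q S a b = Aset p q S b a := by
  have h : ∀ j : Fin n, {t | t ∈ Eset p q a b ∧ j ∈ S t}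
      = {t | t ∈ Eset p q b a ∧ j ∈ S t} := by
    intro j; rw [Eset_comm]
  ext j; rw [mem_Aset, mem_Aset, h]

lemma S_eq_union (hS : ∀ t, S t = topSet k (X t (p t)) ∪ topSet k (X t (q t)))
    {a b : Fin m} {t : ℕ} (ht : t ∈ Eset p q a b) :
    S t = topSet k (X t a) ∪ topSet k (X t b) := by
  rcases ht with ⟨hp, hq⟩ | ⟨hp, hq⟩
  · rw [hS t, hp, hq]
  · rw [hS t, hp, hq, Set.union_comm]

lemma consensus
    (hX1 : ∀ t (i : Fin m) (j : Fin n), (i = p t ∨ i = q t) → j ∈ S t →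
      X (t + 1) i j = (X t (p t) j + X t (q t) j) / 2)
    (hlim : ∀ (i : Fin m) (j : Fin n),
      Tendsto (fun t => X t i j) atTop (𝓝 (Xinf i j)))
    {a b : Fin m} {j' : Fin n} (hj : j' ∈ Aset p q S a b) :
    Xinf a j' = Xinf b j' := by
  refine lim_eq' hj ((hlim a j').comp (tendsto_add_atTop_nat 1))
    ((hlim b j').comp (tendsto_add_atTop_nat 1)) ?_
  rintro t ⟨htE, htS⟩
  have ha : a = p t ∨ a = q t := by
    rcases htE with ⟨hp, _⟩ | ⟨_, hq⟩
    · exact Or.inl hp.symm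
    · exact Or.inr hq.symm
  have hb : b = p t ∨ b = q t := by
    rcases htE with ⟨_, hq⟩ | ⟨hp, _⟩
    · exact Or.inr hq.symm
    · exact Or.inl hp.symm
  show X (t + 1) a j' = X (t + 1) b j'
  rw [hX1 t a j' ha htS, hX1 t b j' hb htS]

lemma Aset_nonempty (hk : 1 ≤ k) (hkn : k ≤ n)
    (hS : ∀ t, S t = topSet k (X t (p t)) ∪ topSet k (X t (q t)))
    {a b : Fin m} (hE : (Eset p q a b).Infinite) :
    (Aset p q S a b).Nonempty := by
  by_contra hne
  have hall : ∀ jj : Fin n, {t | t ∈ Eset p q a b ∧ jj ∈ S t}.Finite := by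
    intro jj
    rw [← Set.not_infinite]
    exact fun hinf => hne ⟨jj, hinf⟩
  have hF : (⋃ jj : Fin n, {t | t ∈ Eset p q a b ∧ jj ∈ S t}).Finite :=
    Set.finite_iUnion hall
  apply hE
  apply hF.subset
  intro t ht
  obtain ⟨jj, hjj⟩ : (S t).Nonempty := by
    rw [S_eq_union hS ht]
    exact (topSet_nonempty hk hkn (X t a)).mono Set.subset_union_left
  exact Set.mem_iUnion.mpr ⟨jj, ht, hjj⟩

lemma alpha_le {a b : Fin m} {j' : Fin n} (hj : j' ∈ Aset p q S a b) :
    alphaE p q S Xinf a b ≤ Xinf a j' :=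
  csInf_le (Set.toFinite _).bddBelow ⟨j', hj, rfl⟩

lemma alpha_mem {a b : Fin m} (hne : (Aset p q S a b).Nonempty) :
    ∃ js ∈ Aset p q S a b, Xinf a js = alphaE p q S Xinf a b := by
  have := Set.Nonempty.csInf_mem (hne.image (fun j => Xinf a j)) (Set.toFinite _)
  obtain ⟨js, hjs, heq⟩ := this
  exact ⟨js, hjs, heq⟩

lemma ev_subset (a b : Fin m) :
    ∃ T, ∀ t, T ≤ t → t ∈ Eset p q a b → S t ⊆ Aset p q S a b := by
  have hF : (⋃ jj ∈ {jj : Fin n | jj ∉ Aset p q S a b},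
      {t | t ∈ Eset p q a b ∧ jj ∈ S t}).Finite := by
    apply Set.Finite.biUnion (Set.toFinite _)
    intro jj hjj
    exact Set.not_infinite.mp hjj
  obtain ⟨T, hT⟩ := fin_ev hF
  refine ⟨T, fun t htT htE jj hjjS => ?_⟩
  by_contra hjjA
  exact hT t htT (Set.mem_biUnion hjjA ⟨htE, hjjS⟩)

end Gossip
section Gossip2

variable {m n k : ℕ} {p q : ℕ → Fin m} {X : ℕ → Fin m → Fin n → ℝ}
  {S : ℕ → Set (Fin n)} {Xinf : Fin m → Fin n → ℝ}

lemma core (hk : 1 ≤ k)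
    (hS : ∀ t, S t = topSet k (X t (p t)) ∪ topSet k (X t (q t)))
    (hX1 : ∀ t (i : Fin m) (j : Fin n), (i = p t ∨ i = q t) → j ∈ S t →
      X (t + 1) i j = (X t (p t) j + X t (q t) j) / 2)
    (hlim : ∀ (i : Fin m) (j : Fin n),
      Tendsto (fun t => X t i j) atTop (𝓝 (Xinf i j)))
    (a b : Fin m) (K : Set (Fin n)) (hKA : K ⊆ Aset p q S a b)
    (hKcard : k ≤ K.ncard)
    (hKgt : ∀ l ∈ K, alphaE p q S Xinf a b < Xinf a l) : False := by
  obtain ⟨j₀, hj₀K⟩ : K.Nonempty := Set.nonempty_of_ncard_ne_zero (by omega)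
  obtain ⟨js, hjsA, hjseq⟩ := alpha_mem (Xinf := Xinf) ⟨j₀, hKA hj₀K⟩
  have hjsb : Xinf b js = Xinf a js := (consensus hX1 hlim hjsA).symm
  have hev : ∀ᶠ t in atTop, ∀ l ∈ K, X t a js < X t a l ∧ X t b js < X t b l := by
    rw [eventually_all_finite (Set.toFinite K)]
    intro l hl
    have h1 : Xinf a js < Xinf a l := by rw [hjseq]; exact hKgt l hl
    have h2 : Xinf b js < Xinf b l := by
      rw [hjsb, ← consensus hX1 hlim (hKA hl)]; exact h1
    exact ((hlim a js).eventually_lt (hlim a l) h1).and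
      ((hlim b js).eventually_lt (hlim b l) h2)
  obtain ⟨T, hT⟩ := eventually_atTop.mp hev
  apply hjsA
  apply (Set.finite_Iio T).subset
  rintro t ⟨htE, htS⟩
  by_contra hlt
  rw [Set.mem_Iio, not_lt] at hlt
  have hnota : js ∉ topSet k (X t a) :=
    not_mem_topSet_of (fun l hl => (hT t hlt l hl).1) hKcard
  have hnotb : js ∉ topSet k (X t b) :=
    not_mem_topSet_of (fun l hl => (hT t hlt l hl).2) hKcard
  rw [S_eq_union hS htE] at htS
  rcases htS with h | h
  · exact hnota h
  · exact hnotb h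

lemma main_lemma (hk : 1 ≤ k) (hkn : k ≤ n)
    (hS : ∀ t, S t = topSet k (X t (p t)) ∪ topSet k (X t (q t)))
    (hX1 : ∀ t (i : Fin m) (j : Fin n), (i = p t ∨ i = q t) → j ∈ S t →
      X (t + 1) i j = (X t (p t) j + X t (q t) j) / 2)
    (hlim : ∀ (i : Fin m) (j : Fin n),
      Tendsto (fun t => X t i j) atTop (𝓝 (Xinf i j)))
    (a b : Fin m) (hE : (Eset p q a b).Infinite) (j : Fin n)
    (hgt : alphaE p q S Xinf a b < Xinf a j) : j ∈ Aset p q S a b := by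
  by_contra hjA
  have hfin : {t | t ∈ Eset p q a b ∧ j ∈ S t}.Finite := Set.not_infinite.mp hjA
  obtain ⟨T₀, hT₀⟩ := fin_ev hfin
  set K := {l : Fin n | {t | t ∈ Eset p q a b ∧ l ∈ topSet k (X t a)}.Infinite}
    with hK
  have hKA : K ⊆ Aset p q S a b := by
    intro l hl
    refine hl.mono ?_
    rintro t ⟨htE, htT⟩
    exact ⟨htE, by rw [S_eq_union hS htE]; exact Or.inl htT⟩
  have hKcard : k ≤ K.ncard := by
    have hF : (⋃ l ∈ {l : Fin n | l ∉ K},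
        {t | t ∈ Eset p q a b ∧ l ∈ topSet k (X t a)}).Finite := by
      apply Set.Finite.biUnion (Set.toFinite _)
      intro l hl
      exact Set.not_infinite.mp hl
    obtain ⟨T₂, hT₂⟩ := fin_ev hF
    obtain ⟨t₀, ht₀E, ht₀⟩ := hE.exists_gt T₂
    have hsub : topSet k (X t₀ a) ⊆ K := by
      intro l hl
      by_contra hlK
      exact hT₂ t₀ ht₀.le (Set.mem_biUnion hlK ⟨ht₀E, hl⟩)
    exact (card_topSet (X t₀ a) k hkn).trans (Set.ncard_le_ncard hsub)
  have hKgt : ∀ l ∈ K, alphaE p q S Xinf a b < Xinf a l := by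
    intro l hl
    have hs : ({t | t ∈ Eset p q a b ∧ l ∈ topSet k (X t a)} \ Set.Iio T₀).Infinite :=
      hl.diff (Set.finite_Iio T₀)
    have hle : Xinf a j ≤ Xinf a l := by
      refine lim_le' hs (hlim a j) (hlim a l) ?_
      rintro t ⟨⟨htE, htTop⟩, htge⟩
      rw [Set.mem_Iio, not_lt] at htge
      have hjS : j ∉ S t := fun hjs => hT₀ t htge ⟨htE, hjs⟩
      have hjtop : j ∉ topSet k (X t a) := fun h =>
        hjS (by rw [S_eq_union hS htE]; exact Or.inl h)
      exact (lt_of_mem_topSet hjtop htTop).le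
    exact lt_of_lt_of_le hgt hle
  exact core hk hS hX1 hlim a b K hKA hKcard hKgt

lemma alpha_shared_le (hk : 1 ≤ k) (hkn : k ≤ n)
    (hS : ∀ t, S t = topSet k (X t (p t)) ∪ topSet k (X t (q t)))
    (hX1 : ∀ t (i : Fin m) (j : Fin n), (i = p t ∨ i = q t) → j ∈ S t →
      X (t + 1) i j = (X t (p t) j + X t (q t) j) / 2)
    (hlim : ∀ (i : Fin m) (j : Fin n),
      Tendsto (fun t => X t i j) atTop (𝓝 (Xinf i j)))
    (a b c : Fin m) (hE1 : (Eset p q a b).Infinite)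
    (hE2 : (Eset p q a c).Infinite) :
    alphaE p q S Xinf a b ≤ alphaE p q S Xinf a c := by
  by_contra h
  push_neg at h
  refine core hk hS hX1 hlim a c (Aset p q S a b) ?_ ?_ ?_
  · intro l hl
    exact main_lemma hk hkn hS hX1 hlim a c hE2 l (lt_of_lt_of_le h (alpha_le hl))
  · obtain ⟨T, hT⟩ := ev_subset (S := S) a b
    obtain ⟨t₀, ht₀E, ht₀⟩ := hE1.exists_gt T
    have hsub : topSet k (X t₀ a) ⊆ Aset p q S a b := by
      refine subset_trans ?_ (hT t₀ ht₀.le ht₀E)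
      rw [S_eq_union hS ht₀E]
      exact Set.subset_union_left
    exact (card_topSet (X t₀ a) k hkn).trans (Set.ncard_le_ncard hsub)
  · intro l hl
    exact lt_of_lt_of_le h (alpha_le hl)

lemma alpha_symm
    (hX1 : ∀ t (i : Fin m) (j : Fin n), (i = p t ∨ i = q t) → j ∈ S t →
      X (t + 1) i j = (X t (p t) j + X t (q t) j) / 2)
    (hlim : ∀ (i : Fin m) (j : Fin n),
      Tendsto (fun t => X t i j) atTop (𝓝 (Xinf i j)))
    (a b : Fin m) : alphaE p q S Xinf a b = alphaE p q S Xinf b a := by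
  unfold alphaE
  rw [Aset_comm a b]
  congr 1
  apply Set.image_congr
  intro j hj
  exact (consensus hX1 hlim hj).symm

end Gossip2
/-- In the generalized top-k selective gossiping trajectory with
connected connectivity graph, fix an edge {i₁,i₂} and let
α_{i₁i₂} = min_{j ∈ S^∞_{i₁i₂}} X_{i₁j}(∞). If some agent's limiting opinion on
a candidate j exceeds α_{i₁i₂}, then j ∈ S^∞_{i₁'i₂'} for every edge {i₁',i₂'}
of the connectivity graph. -/
theorem stmt12 (m n k : ℕ) (hm : 2 ≤ m) (hk : 1 ≤ k) (hkn : k ≤ n)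
    (p q : ℕ → Fin m) (hpq : ∀ t, p t ≠ q t)
    (X : ℕ → Fin m → Fin n → ℝ)
    (S : ℕ → Set (Fin n))
    (hS : ∀ t, S t = topSet k (X t (p t)) ∪ topSet k (X t (q t)))
    (hX1 : ∀ t (i : Fin m) (j : Fin n), (i = p t ∨ i = q t) → j ∈ S t →
      X (t + 1) i j = (X t (p t) j + X t (q t) j) / 2)
    (hX2 : ∀ t (i : Fin m) (j : Fin n), ¬((i = p t ∨ i = q t) ∧ j ∈ S t) →
      X (t + 1) i j = X t i j)
    (hconn : (SimpleGraph.fromRel (fun a b =>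
      {t : ℕ | (p t = a ∧ q t = b) ∨ (p t = b ∧ q t = a)}.Infinite)).Connected)
    (Xinf : Fin m → Fin n → ℝ)
    (hlim : ∀ (i : Fin m) (j : Fin n),
      Tendsto (fun t => X t i j) atTop (𝓝 (Xinf i j)))
    (i₁ i₂ : Fin m) (hne : i₁ ≠ i₂)
    (hE : {t : ℕ | (p t = i₁ ∧ q t = i₂) ∨ (p t = i₂ ∧ q t = i₁)}.Infinite)
    (α : ℝ)
    (hα : α = sInf ((fun j => Xinf i₁ j) '' {j : Fin n |
      {t : ℕ | ((p t = i₁ ∧ q t = i₂) ∨ (p t = i₂ ∧ q t = i₁)) ∧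
        j ∈ S t}.Infinite}))
    (j : Fin n) (i : Fin m) (hgt : α < Xinf i j) :
    ∀ i₁' i₂' : Fin m, i₁' ≠ i₂' →
      {t : ℕ | (p t = i₁' ∧ q t = i₂') ∨ (p t = i₂' ∧ q t = i₁')}.Infinite →
      j ∈ {j' : Fin n |
        {t : ℕ | ((p t = i₁' ∧ q t = i₂') ∨ (p t = i₂' ∧ q t = i₁')) ∧
          j' ∈ S t}.Infinite} := by
  intro i₁' i₂' hne' hE'
  set G := SimpleGraph.fromRel (fun a b =>
      {t : ℕ | (p t = a ∧ q t = b) ∨ (p t = b ∧ q t = a)}.Infinite) with hG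
  have hE₀ : (Eset p q i₁ i₂).Infinite := hE
  have hE'' : (Eset p q i₁' i₂').Infinite := hE'
  have hadj : ∀ a b : Fin m, a ≠ b → (Eset p q a b).Infinite → G.Adj a b :=
    fun a b hab hinf => (SimpleGraph.fromRel_adj _ a b).mpr ⟨hab, Or.inl hinf⟩
  have hadj' : ∀ a b : Fin m, G.Adj a b → a ≠ b ∧ (Eset p q a b).Infinite := by
    intro a b h
    rw [hG, SimpleGraph.fromRel_adj] at h
    refine ⟨h.1, ?_⟩
    rcases h.2 with h2 | h2
    · exact h2
    · rw [Eset_comm]; exact h2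
  have hshared : ∀ a b c : Fin m, (Eset p q a b).Infinite →
      (Eset p q a c).Infinite →
      alphaE p q S Xinf a b = alphaE p q S Xinf a c := fun a b c h1 h2 =>
    le_antisymm (alpha_shared_le hk hkn hS hX1 hlim a b c h1 h2)
      (alpha_shared_le hk hkn hS hX1 hlim a c b h2 h1)
  set c := alphaE p q S Xinf i₁ i₂ with hc
  have hP : ∀ u : Fin m, ∀ v, G.Adj u v → alphaE p q S Xinf u v = c := by
    have step : ∀ u w, G.Adj u w →
        (∀ v, G.Adj u v → alphaE p q S Xinf u v = c) →
        (∀ v, G.Adj w v → alphaE p q S Xinf w v = c) := by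
      intro u w huw hu v hwv
      have huw2 := (hadj' u w huw).2
      have hwv2 := (hadj' w v hwv).2
      have hwu2 : (Eset p q w u).Infinite := by rw [Eset_comm]; exact huw2
      calc alphaE p q S Xinf w v = alphaE p q S Xinf w u :=
            hshared w v u hwv2 hwu2
        _ = alphaE p q S Xinf u w := alpha_symm hX1 hlim w u
        _ = c := hu w huw
    intro u
    refine (hconn.preconnected i₁ u).elim (fun wk => walk_ind step wk ?_)
    intro v hv
    exact hshared i₁ v i₂ (hadj' i₁ v hv).2 hE₀
  have hQstep : ∀ u w, G.Adj u w → c < Xinf u j → c < Xinf w j := by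
    intro u w huw hu
    have h2 := (hadj' u w huw).2
    have hαuw : alphaE p q S Xinf u w = c := hP u w huw
    have hjA : j ∈ Aset p q S u w :=
      main_lemma hk hkn hS hX1 hlim u w h2 j (by rw [hαuw]; exact hu)
    rw [← consensus hX1 hlim hjA]
    exact hu
  have hQi : c < Xinf i j := by rw [hα] at hgt; exact hgt
  have hQ : ∀ u, c < Xinf u j := fun u =>
    (hconn.preconnected i u).elim (fun wk => walk_ind hQstep wk hQi)
  have hαe : alphaE p q S Xinf i₁' i₂' = c := hP i₁' i₂' (hadj i₁' i₂' hne' hE'')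
  exact main_lemma hk hkn hS hX1 hlim i₁' i₂' hE'' j (by rw [hαe]; exact hQ i₁')
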